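/- Let G be a plane graph with layers L_1,…,L_r, let D be a ve-dominating set of G, let k_i = |D ∩ L_i|, and let c_i be the number of 3-non-vacuous layer components of layer L_i. Then c_i ≤ k_{i+1} + k_{i+2} + k_{i+3} + k_{i+4}. -/

import Mathlib

/-- `(T, X)` is a tree-decomposition of `G`: `T` is a tree, every vertex of `G`
is in some bag, every edge of `G` has both endpoints in some common bag, and for
every node `j` on the (unique) path between nodes `i` and `k` of `T`, we have
`X i ∩ X k ⊆ X j`. -/
def IsTreeDecomp {V ι : Type*} (G : SimpleGraph V) (T : SimpleGraph ι) (X : ι → Set V) : Prop :=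
  T.IsTree ∧
  (∀ v : V, ∃ i : ι, v ∈ X i) ∧
  (∀ u v : V, G.Adj u v → ∃ i : ι, u ∈ X i ∧ v ∈ X i) ∧
  (∀ i k : ι, ∀ p : T.Walk i k, p.IsPath → ∀ j ∈ p.support, X i ∩ X k ⊆ X j)

/-- With respect to the root `r`, the node `k` lies in the subtree rooted at `j`
(i.e. `k` is `j` or a descendant of `j`): every path from `r` to `k` passes
through `j`. -/
def InSubtree {ι : Type*} (T : SimpleGraph ι) (r j k : ι) : Prop :=
  ∀ p : T.Walk r k, p.IsPath → j ∈ p.support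

/-- With respect to the root `r`, the node `j` is a child of the node `i`. -/
def IsChild {ι : Type*} (T : SimpleGraph ι) (r i j : ι) : Prop :=
  T.Adj i j ∧ InSubtree T r i j

/-- `V_i`: the union of the bags over the subtree rooted at `i`. -/
def SubtreeVerts {V ι : Type*} (T : SimpleGraph ι) (X : ι → Set V) (r i : ι) : Set V :=
  ⋃ k ∈ {k : ι | InSubtree T r i k}, X k

open Set

/-- `G` has treewidth at most `w`: there is a tree-decomposition all of whose
bags have at most `w + 1` vertices. -/
def HasTreewidthLE {V : Type*} (G : SimpleGraph V) (w : ℕ) : Prop :=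
  ∃ (ι : Type) (T : SimpleGraph ι) (X : ι → Set V),
    IsTreeDecomp G T X ∧ ∀ i : ι, (X i).ncard ≤ w + 1

/-- `pos` is a good (crossing-free, straight-line) drawing of the subgraph of
`G` induced by `A`: vertices are distinct points, no vertex lies in the
interior of an edge, and two distinct edges meet only in common endpoints. -/
def GoodDrawing {V : Type*} (G : SimpleGraph V) (pos : V → ℝ × ℝ) (A : Set V) : Prop :=
  Set.InjOn pos A ∧
  (∀ u v w : V, u ∈ A → v ∈ A → w ∈ A → G.Adj u v → w ≠ u → w ≠ v →
    pos w ∉ segment ℝ (pos u) (pos v)) ∧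
  (∀ u v x y : V, u ∈ A → v ∈ A → x ∈ A → y ∈ A → G.Adj u v → G.Adj x y →
    ({u, v} : Set V) ≠ {x, y} →
    ∀ p ∈ segment ℝ (pos u) (pos v) ∩ segment ℝ (pos x) (pos y),
      p ∈ ({pos u, pos v} : Set (ℝ × ℝ)) ∩ {pos x, pos y})

/-- The set of points of the plane covered by the drawing of `G[A]`. -/
def DrawSet {V : Type*} (G : SimpleGraph V) (pos : V → ℝ × ℝ) (A : Set V) :
    Set (ℝ × ℝ) :=
  (pos '' A) ∪
    ⋃ (u : V) (v : V) (_ : u ∈ A) (_ : v ∈ A) (_ : G.Adj u v),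
      segment ℝ (pos u) (pos v)

/-- The vertices of `A` lying on the boundary of the outer (unbounded) face of
the drawing of `G[A]`. -/
def OuterVerts {V : Type*} (G : SimpleGraph V) (pos : V → ℝ × ℝ) (A : Set V) :
    Set V :=
  {v ∈ A | pos v ∈ closure {p : ℝ × ℝ | p ∉ DrawSet G pos A ∧
    ¬ Bornology.IsBounded (connectedComponentIn (DrawSet G pos A)ᶜ p)}}

/-- The vertices remaining after `n` times peeling off the outer layer. -/
def RemainSet {V : Type*} (G : SimpleGraph V) (pos : V → ℝ × ℝ) : ℕ → Set V
  | 0 => Set.univ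
  | n + 1 => RemainSet G pos n \ OuterVerts G pos (RemainSet G pos n)

/-- The `i`-th layer `L_i` of the drawing (for `i ≥ 1`). -/
def LayerSet {V : Type*} (G : SimpleGraph V) (pos : V → ℝ × ℝ) (i : ℕ) : Set V :=
  RemainSet G pos (i - 1) \ RemainSet G pos i

/-- `pos` is a (straight-line) plane embedding of `G`. -/
def IsPlanarEmb {V : Type*} (G : SimpleGraph V) (pos : V → ℝ × ℝ) : Prop :=
  GoodDrawing G pos Set.univ

/-- The closed neighborhood `N[D]` of a vertex set `D` in a simple graph `G`. -/
def closedNbhd {V : Type*} (G : SimpleGraph V) (D : Set V) : Set V :=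
  D ∪ {v | ∃ d ∈ D, G.Adj d v}

/-- `D` is a vertex-edge dominating set. -/
def IsVeDomSet {V : Type*} (G : SimpleGraph V) (D : Set V) : Prop :=
  ∀ u v : V, G.Adj u v →
    ∃ w ∈ D, u ∈ closedNbhd G {w} ∨ v ∈ closedNbhd G {w}

/-- The subgraph of `G` induced by `C` is connected. -/
def ConnInduced {V : Type*} (G : SimpleGraph V) (C : Set V) : Prop :=
  (G.induce C).Connected

/-- `C` has no cut vertex (every vertex-deleted induced subgraph stays
connected, or becomes empty). -/
def NoCutVertex {V : Type*} (G : SimpleGraph V) (C : Set V) : Prop :=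
  ∀ x ∈ C, (C \ {x}) = ∅ ∨ ConnInduced G (C \ {x})

/-- `C` is (the vertex set of) a block of the subgraph of `G` induced by `A`:
a maximal connected subset of `A` without a cut vertex. -/
def IsBlockOf {V : Type*} (G : SimpleGraph V) (A C : Set V) : Prop :=
  C ⊆ A ∧ C.Nonempty ∧ ConnInduced G C ∧ NoCutVertex G C ∧
  (∀ C' : Set V, C ⊆ C' → C' ⊆ A → ConnInduced G C' → NoCutVertex G C' → C' = C)

/-- The region of the plane enclosed by the drawing of `G[C]`: the union of the
bounded complementary components of the drawing. -/
def EnclosedRegion {V : Type*} (G : SimpleGraph V) (pos : V → ℝ × ℝ) (C : Set V) :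
    Set (ℝ × ℝ) :=
  {p : ℝ × ℝ | p ∉ DrawSet G pos C ∧
    Bornology.IsBounded (connectedComponentIn (DrawSet G pos C)ᶜ p)}

/-- `C` is a layer component of layer `L_i`: a block of `G[L_i]`. -/
def IsLayerComp {V : Type*} (G : SimpleGraph V) (pos : V → ℝ × ℝ) (i : ℕ)
    (C : Set V) : Prop :=
  IsBlockOf G (LayerSet G pos i) C

/-- `C` (a layer component of layer `L_i`) is `s`-non-vacuous: for `s = 1`,
some vertex of `L_{i+1}` lies inside the region enclosed by `C`; for `s > 1`,
some `(s-1)`-non-vacuous layer component of `L_{i+1}` lies inside that region. -/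
def SNonVacuous {V : Type*} (G : SimpleGraph V) (pos : V → ℝ × ℝ) :
    ℕ → ℕ → Set V → Prop
  | 0, _, _ => True
  | 1, i, C => ∃ v ∈ LayerSet G pos (i + 1), pos v ∈ EnclosedRegion G pos C
  | s + 2, i, C => ∃ C' : Set V, IsLayerComp G pos (i + 1) C' ∧
      SNonVacuous G pos (s + 1) (i + 1) C' ∧
      ∀ v ∈ C', pos v ∈ EnclosedRegion G pos C

/-- `k_i = |D ∩ L_i|`. -/
noncomputable def layerK {V : Type*} (G : SimpleGraph V) (pos : V → ℝ × ℝ)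
    (D : Set V) (i : ℕ) : ℕ :=
  (D ∩ LayerSet G pos i).ncard

/-- `c_i`: the number of `3`-non-vacuous layer components of layer `L_i`. -/
noncomputable def threeNVCount {V : Type*} (G : SimpleGraph V) (pos : V → ℝ × ℝ)
    (i : ℕ) : ℕ :=
  {C : Set V | IsLayerComp G pos i C ∧ SNonVacuous G pos 3 i C}.ncard

section Draw
variable {V : Type*} {G : SimpleGraph V} {pos : V → ℝ × ℝ}

lemma mem_drawSet_iff {A : Set V} {q : ℝ × ℝ} :
    q ∈ DrawSet G pos A ↔ (∃ c ∈ A, pos c = q) ∨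
      ∃ x y : V, x ∈ A ∧ y ∈ A ∧ G.Adj x y ∧ q ∈ segment ℝ (pos x) (pos y) := by
  unfold DrawSet
  simp only [Set.mem_union, Set.mem_image, Set.mem_iUnion]
  constructor
  · rintro (⟨c, hc, hcq⟩ | ⟨x, y, hx, hy, hxy, hseg⟩)
    · exact Or.inl ⟨c, hc, hcq⟩
    · exact Or.inr ⟨x, y, hx, hy, hxy, hseg⟩
  · rintro (⟨c, hc, hcq⟩ | ⟨x, y, hx, hy, hxy, hseg⟩)
    · exact Or.inl ⟨c, hc, hcq⟩
    · exact Or.inr ⟨x, y, hx, hy, hxy, hseg⟩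

lemma drawSet_mono {A B : Set V} (h : B ⊆ A) : DrawSet G pos B ⊆ DrawSet G pos A := by
  intro q hq
  rcases mem_drawSet_iff.1 hq with ⟨c, hc, hcq⟩ | ⟨x, y, hx, hy, hxy, hseg⟩
  · exact mem_drawSet_iff.2 (Or.inl ⟨c, h hc, hcq⟩)
  · exact mem_drawSet_iff.2 (Or.inr ⟨x, y, h hx, h hy, hxy, hseg⟩)

lemma mem_drawSet_of_mem {A : Set V} {v : V} (hv : v ∈ A) : pos v ∈ DrawSet G pos A :=
  Set.mem_union_left _ (Set.mem_image_of_mem _ hv)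

lemma segment_subset_drawSet {A : Set V} {u v : V} (hu : u ∈ A) (hv : v ∈ A)
    (huv : G.Adj u v) : segment ℝ (pos u) (pos v) ⊆ DrawSet G pos A := fun q hq =>
  mem_drawSet_iff.2 (Or.inr ⟨u, v, hu, hv, huv, hq⟩)

lemma isCompact_segment' (a b : ℝ × ℝ) : IsCompact (segment ℝ a b) := by
  rw [segment_eq_image ℝ a b]
  apply isCompact_Icc.image
  continuity

lemma isCompact_drawSet [Fintype V] (A : Set V) : IsCompact (DrawSet G pos A) := by
  unfold DrawSet
  apply IsCompact.union
  · exact (A.toFinite.image pos).isCompact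
  · classical
    refine isCompact_iUnion fun u => isCompact_iUnion fun v => ?_
    rw [Set.iUnion_eq_if]
    split
    · rw [Set.iUnion_eq_if]; split
      · rw [Set.iUnion_eq_if]; split
        · exact isCompact_segment' _ _
        · exact isCompact_empty
      · exact isCompact_empty
    · exact isCompact_empty

lemma isClosed_drawSet [Fintype V] (A : Set V) : IsClosed (DrawSet G pos A) :=
  (isCompact_drawSet A).isClosed

lemma pos_inj (hemb : IsPlanarEmb G pos) : Function.Injective pos := fun a b h =>
  hemb.1 (Set.mem_univ a) (Set.mem_univ b) h

lemma not_mem_drawSet (hemb : IsPlanarEmb G pos) {B : Set V} {u : V} (hu : u ∉ B) :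
    pos u ∉ DrawSet G pos B := by
  intro h
  rcases mem_drawSet_iff.1 h with ⟨c, hc, hcu⟩ | ⟨x, y, hx, hy, hxy, hseg⟩
  · exact hu (pos_inj hemb hcu ▸ hc)
  · have hux : u ≠ x := fun h => hu (h ▸ hx)
    have huy : u ≠ y := fun h => hu (h ▸ hy)
    exact hemb.2.1 x y u (Set.mem_univ _) (Set.mem_univ _) (Set.mem_univ _) hxy hux huy hseg

lemma segment_drawSet (hemb : IsPlanarEmb G pos) {B : Set V} {u v : V}
    (huv : G.Adj u v) (hu : u ∉ B) :
    ∀ q ∈ segment ℝ (pos u) (pos v), q ∈ DrawSet G pos B → q = pos v := by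
  intro q hq hqB
  rcases mem_drawSet_iff.1 hqB with ⟨c, hc, hcq⟩ | ⟨x, y, hx, hy, hxy, hseg⟩
  · subst hcq
    by_contra hne
    have hcu : c ≠ u := fun h => hu (h ▸ hc)
    have hcv : c ≠ v := fun h => hne (by rw [h])
    exact hemb.2.1 u v c (Set.mem_univ _) (Set.mem_univ _) (Set.mem_univ _) huv hcu hcv hq
  · have hne : ({u, v} : Set V) ≠ {x, y} := by
      intro h
      have : u ∈ ({x, y} : Set V) := h ▸ Set.mem_insert u {v}
      rcases this with h' | h'
      · exact hu (h' ▸ hx)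
      · exact hu ((Set.mem_singleton_iff.1 h') ▸ hy)
    have := hemb.2.2 u v x y (Set.mem_univ _) (Set.mem_univ _) (Set.mem_univ _)
      (Set.mem_univ _) huv hxy hne q ⟨hq, hseg⟩
    rcases this.1 with h' | h'
    · exfalso
      exact not_mem_drawSet hemb hu (h' ▸ hqB)
    · exact h'

lemma segment_disjoint_drawSet (hemb : IsPlanarEmb G pos) {B : Set V} {u v : V}
    (huv : G.Adj u v) (hu : u ∉ B) (hv : v ∉ B) :
    ∀ q ∈ segment ℝ (pos u) (pos v), q ∉ DrawSet G pos B := fun q hq hqB =>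
  not_mem_drawSet hemb hv ((segment_drawSet hemb huv hu q hq hqB) ▸ hqB)

end Draw
section Topo

open Bornology

lemma plane_rank : 1 < Module.rank ℝ (ℝ × ℝ) := by
  rw [rank_prod', Module.rank_self]
  exact_mod_cast one_lt_two

lemma comp_eq_comp {K : Set (ℝ × ℝ)} {S : Set (ℝ × ℝ)} (hS : IsPreconnected S)
    (hdis : S ⊆ Kᶜ) {p q : ℝ × ℝ} (hp : p ∈ S) (hq : q ∈ S) :
    connectedComponentIn Kᶜ p = connectedComponentIn Kᶜ q :=
  connectedComponentIn_eq ((hS.subset_connectedComponentIn hp hdis) hq)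

/-- A point of the complement of a finite set has unbounded component. -/
lemma unbounded_comp_of_finite {S : Set (ℝ × ℝ)} (hS : S.Finite) {p : ℝ × ℝ} (hp : p ∉ S) :
    ¬ IsBounded (connectedComponentIn Sᶜ p) := by
  have hpc : IsPathConnected Sᶜ :=
    Set.Countable.isPathConnected_compl_of_one_lt_rank plane_rank hS.countable
  have heq : connectedComponentIn Sᶜ p = Sᶜ :=
    hpc.isConnected.isPreconnected.connectedComponentIn hp
  rw [heq]
  intro hb
  have : IsBounded (Set.univ : Set (ℝ × ℝ)) := by
    rw [← Set.union_compl_self S]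
    exact hS.isBounded.union hb
  exact NormedSpace.unbounded_univ ℝ (ℝ × ℝ) this

lemma unbounded_comp_mono {K K' : Set (ℝ × ℝ)} (h : K' ⊆ K) {p : ℝ × ℝ}
    (hu : ¬ IsBounded (connectedComponentIn Kᶜ p)) :
    ¬ IsBounded (connectedComponentIn K'ᶜ p) := fun hb =>
  hu (hb.subset (connectedComponentIn_mono p (Set.compl_subset_compl.2 h)))

/-- The enclosed region is open. -/
lemma isOpen_enclosedRegion {V : Type*} [Fintype V] {G : SimpleGraph V} {pos : V → ℝ × ℝ}
    (C : Set V) : IsOpen (EnclosedRegion G pos C) := by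
  rw [isOpen_iff_forall_mem_open]
  rintro p ⟨hp1, hp2⟩
  refine ⟨connectedComponentIn (DrawSet G pos C)ᶜ p, ?_,
    (isClosed_drawSet C).isOpen_compl.connectedComponentIn, mem_connectedComponentIn hp1⟩
  intro q hq
  have hq1 : q ∈ (DrawSet G pos C)ᶜ := connectedComponentIn_subset _ _ hq
  have heq : connectedComponentIn (DrawSet G pos C)ᶜ p
      = connectedComponentIn (DrawSet G pos C)ᶜ q := connectedComponentIn_eq hq
  exact ⟨hq1, heq ▸ hp2⟩

/-- Points in the closure of a component, outside the component, lie in `K`. -/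
lemma closure_comp_diff_subset {K : Set (ℝ × ℝ)} (hK : IsClosed K) (p : ℝ × ℝ) :
    closure (connectedComponentIn Kᶜ p) \ connectedComponentIn Kᶜ p ⊆ K := by
  rintro q ⟨hq1, hq2⟩
  by_contra hqK
  have hopen : IsOpen (connectedComponentIn Kᶜ q) := hK.isOpen_compl.connectedComponentIn
  have hqmem : q ∈ connectedComponentIn Kᶜ q := mem_connectedComponentIn hqK
  obtain ⟨r, hr1, hr2⟩ := mem_closure_iff.1 hq1 _ hopen hqmem
  have e1 : connectedComponentIn Kᶜ q = connectedComponentIn Kᶜ r := connectedComponentIn_eq hr1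
  have e2 : connectedComponentIn Kᶜ p = connectedComponentIn Kᶜ r := connectedComponentIn_eq hr2
  exact hq2 (e2 ▸ e1 ▸ hqmem)

/-- Key topological step ruling out mutual enclosure. -/
lemma no_double_enclosure {K₁ K₂ : Set (ℝ × ℝ)} (hK₁ : IsClosed K₁) (hK₂ : IsClosed K₂)
    {E : Set (ℝ × ℝ)} (hE : IsPreconnected Eᶜ) (hbE : IsBounded E)
    (hEK₁ : E ⊆ K₁)
    (hS₁ : IsPreconnected (K₁ \ E)) (hS₂ : IsPreconnected (K₂ \ E))
    (hK12 : K₁ ∩ K₂ ⊆ E)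
    {b₁ b₂ : ℝ × ℝ} (hb₁ : b₁ ∈ K₁ \ E) (hb₂ : b₂ ∈ K₂ \ E)
    (hb₁u : ¬ IsBounded (connectedComponentIn K₂ᶜ b₁))
    (hb₂u : ¬ IsBounded (connectedComponentIn K₁ᶜ b₂))
    {p : ℝ × ℝ} (hp₁ : p ∉ K₁) (hp₂ : p ∉ K₂)
    (hpb₁ : IsBounded (connectedComponentIn K₁ᶜ p))
    (hpb₂ : IsBounded (connectedComponentIn K₂ᶜ p)) : False := by
  set V₁ := connectedComponentIn K₁ᶜ p with hV₁
  set W₂ := connectedComponentIn K₂ᶜ p with hW₂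
  have hS₂K₁ : K₂ \ E ⊆ K₁ᶜ := by
    rintro q ⟨hq2, hqE⟩ hq1
    exact hqE (hK12 ⟨hq1, hq2⟩)
  have hS₁K₂ : K₁ \ E ⊆ K₂ᶜ := by
    rintro q ⟨hq1, hqE⟩ hq2
    exact hqE (hK12 ⟨hq1, hq2⟩)
  have hS₂U : K₂ \ E ⊆ connectedComponentIn K₁ᶜ b₂ :=
    hS₂.subset_connectedComponentIn hb₂ hS₂K₁
  have hS₁U : K₁ \ E ⊆ connectedComponentIn K₂ᶜ b₁ :=
    hS₁.subset_connectedComponentIn hb₁ hS₁K₂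
  have hV₁K₂ : V₁ ⊆ K₂ᶜ := by
    intro q hq hqK₂
    have hqK₁ : q ∈ K₁ᶜ := connectedComponentIn_subset _ _ hq
    have hqE : q ∉ E := fun h => hqK₁ (hEK₁ h)
    have hmem : q ∈ connectedComponentIn K₁ᶜ b₂ := hS₂U ⟨hqK₂, hqE⟩
    have heq : connectedComponentIn K₁ᶜ p = connectedComponentIn K₁ᶜ b₂ := by
      rw [connectedComponentIn_eq hq, connectedComponentIn_eq hmem]
    exact hb₂u (heq ▸ hpb₁)
  have hV₁W₂ : V₁ ⊆ W₂ :=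
    (isPreconnected_connectedComponentIn).subset_connectedComponentIn
      (mem_connectedComponentIn hp₁) hV₁K₂
  have hUW : ∀ r, r ∈ connectedComponentIn K₂ᶜ b₁ → r ∉ W₂ := by
    intro r hr1 hr2
    have : connectedComponentIn K₂ᶜ b₁ = W₂ := by
      rw [connectedComponentIn_eq hr1, hW₂, connectedComponentIn_eq hr2]
    exact hb₁u (this ▸ hpb₂)
  have hV₁open : IsOpen V₁ := hK₁.isOpen_compl.connectedComponentIn
  have hfront : ∃ q ∈ closure V₁ \ V₁, q ∉ E := by
    by_contra h
    push_neg at h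
    have hsub : Eᶜ ⊆ V₁ ∪ (closure V₁)ᶜ := by
      intro q hq
      by_cases hqc : q ∈ closure V₁
      · by_cases hqv : q ∈ V₁
        · exact Or.inl hqv
        · exact absurd (h q ⟨hqc, hqv⟩) hq
      · exact Or.inr hqc
    have hne1 : (Eᶜ ∩ V₁).Nonempty := by
      refine ⟨p, fun hpE => hp₁ (hEK₁ hpE), mem_connectedComponentIn hp₁⟩
    have hne2 : (Eᶜ ∩ (closure V₁)ᶜ).Nonempty := by
      have hbdd : IsBounded (closure V₁ ∪ E) := hpb₁.closure.union hbE
      have hne : (closure V₁ ∪ E) ≠ Set.univ := by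
        intro h'
        exact NormedSpace.unbounded_univ ℝ (ℝ × ℝ) (h' ▸ hbdd)
      obtain ⟨r, hr⟩ := Set.nonempty_compl.2 hne
      rw [Set.compl_union] at hr
      exact ⟨r, hr.2, hr.1⟩
    obtain ⟨r, hr1, hr2, hr3⟩ :=
      hE V₁ (closure V₁)ᶜ hV₁open isClosed_closure.isOpen_compl hsub hne1 hne2
    exact hr3 (subset_closure hr2)
  obtain ⟨q, ⟨hqc, hqv⟩, hqE⟩ := hfront
  have hqK₁ : q ∈ K₁ := closure_comp_diff_subset hK₁ p ⟨hqc, hqv⟩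
  have hqU : q ∈ connectedComponentIn K₂ᶜ b₁ := hS₁U ⟨hqK₁, hqE⟩
  have hqW : q ∈ closure W₂ := closure_mono hV₁W₂ hqc
  have hUopen : IsOpen (connectedComponentIn K₂ᶜ b₁) := hK₂.isOpen_compl.connectedComponentIn
  have hclW : closure W₂ ⊆ (connectedComponentIn K₂ᶜ b₁)ᶜ :=
    closure_minimal (fun r hr hrU => hUW r hrU hr) hUopen.isClosed_compl
  exact hclW hqW hqU

end Topo
section Layers

open Bornology

variable {V : Type*} [Fintype V] {G : SimpleGraph V} {pos : V → ℝ × ℝ}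

/-- The outer (unbounded-face) region of the drawing of `G[A]`. -/
def OuterRegion (G : SimpleGraph V) (pos : V → ℝ × ℝ) (A : Set V) : Set (ℝ × ℝ) :=
  {p : ℝ × ℝ | p ∉ DrawSet G pos A ∧
    ¬ IsBounded (connectedComponentIn (DrawSet G pos A)ᶜ p)}

lemma outerVerts_eq (A : Set V) :
    OuterVerts G pos A = {v ∈ A | pos v ∈ closure (OuterRegion G pos A)} := rfl

lemma outerRegion_anti {A B : Set V} (h : B ⊆ A) :
    OuterRegion G pos A ⊆ OuterRegion G pos B := by
  rintro p ⟨hp1, hp2⟩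
  have hd : DrawSet G pos B ⊆ DrawSet G pos A := drawSet_mono h
  exact ⟨fun hc => hp1 (hd hc), unbounded_comp_mono hd hp2⟩

lemma remainSet_antitone (m n : ℕ) (h : m ≤ n) :
    RemainSet G pos n ⊆ RemainSet G pos m := by
  induction n with
  | zero => simp_all
  | succ k ih =>
    rcases Nat.lt_or_ge m (k+1) with h' | h'
    · exact fun v hv => ih (Nat.lt_succ_iff.1 h') (Set.diff_subset hv)
    · have : m = k + 1 := le_antisymm h h'
      subst this; exact subset_rfl

lemma layerSet_subset_remain (i : ℕ) : LayerSet G pos (i+1) ⊆ RemainSet G pos i :=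
  fun _ h => h.1

lemma layerSet_disjoint {i j : ℕ} (hij : i < j) :
    ∀ v ∈ LayerSet G pos (i+1), v ∉ LayerSet G pos (j+1) := by
  intro v hv hv'
  exact hv.2 (remainSet_antitone _ _ hij hv'.1)

lemma mem_outerVerts_of_layer {j : ℕ} {b : V} (hb : b ∈ LayerSet G pos (j+1)) :
    b ∈ OuterVerts G pos (RemainSet G pos j) := by
  rcases hb with ⟨hb1, hb2⟩
  simp only [RemainSet, Set.mem_diff, not_and, not_not] at hb2
  exact hb2 hb1

/-- Lemma C: a vertex of layer `j+1` is not enclosed by any drawing using only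
vertices remaining at stage `j`. -/
lemma layer_not_enclosed {j : ℕ} {b : V} (hb : b ∈ LayerSet G pos (j+1))
    {B : Set V} (hB : B ⊆ RemainSet G pos j) : pos b ∉ EnclosedRegion G pos B := by
  intro hmem
  have h1 : pos b ∈ closure (OuterRegion G pos (RemainSet G pos j)) :=
    (mem_outerVerts_of_layer hb).2
  have hopen : IsOpen (EnclosedRegion G pos B) := isOpen_enclosedRegion B
  have hdisj : OuterRegion G pos (RemainSet G pos j) ∩ EnclosedRegion G pos B = ∅ := by
    rw [Set.eq_empty_iff_forall_notMem]
    rintro q ⟨hq1, hq2⟩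
    exact (outerRegion_anti hB hq1).2 hq2.2
  obtain ⟨r, hr1, hr2⟩ := mem_closure_iff.1 h1 _ hopen hmem
  rw [Set.eq_empty_iff_forall_notMem] at hdisj
  exact hdisj r ⟨hr2, hr1⟩

lemma segment_sub_convex {a b : ℝ × ℝ} (hab : a ≠ b) :
    Convex ℝ (segment ℝ a b \ {b}) := by
  have : segment ℝ a b \ {b} = (AffineMap.lineMap a b) '' (Set.Ico (0:ℝ) 1) := by
    ext q
    constructor
    · rintro ⟨hq, hqb⟩
      rw [segment_eq_image_lineMap] at hq
      obtain ⟨t, ht, rfl⟩ := hq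
      refine ⟨t, ⟨ht.1, lt_of_le_of_ne ht.2 fun h => hqb ?_⟩, rfl⟩
      subst h; simp
    · rintro ⟨t, ⟨ht0, ht1⟩, rfl⟩
      constructor
      · rw [segment_eq_image_lineMap]
        exact ⟨t, ⟨ht0, le_of_lt ht1⟩, rfl⟩
      · simp only [Set.mem_singleton_iff]
        intro h
        have := (AffineMap.lineMap_injective ℝ hab).eq_iff (a := t) (b := 1)
        rw [AffineMap.lineMap_apply_one] at this
        exact (ne_of_lt ht1) (this.1 h)
  rw [this]
  exact (convex_Ico (0:ℝ) 1).affine_image (AffineMap.lineMap a b)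

end Layers
section Peel

open Bornology

variable {V : Type*} [Fintype V] {G : SimpleGraph V} {pos : V → ℝ × ℝ}

lemma segment_diff_eq {a b : ℝ × ℝ} (hab : a ≠ b) :
    segment ℝ a b \ {b} = (AffineMap.lineMap a b) '' (Set.Ico (0:ℝ) 1) := by
  ext q
  constructor
  · rintro ⟨hq, hqb⟩
    rw [segment_eq_image_lineMap] at hq
    obtain ⟨t, ht, rfl⟩ := hq
    refine ⟨t, ⟨ht.1, lt_of_le_of_ne ht.2 fun h => hqb ?_⟩, rfl⟩
    subst h; simp
  · rintro ⟨t, ⟨ht0, ht1⟩, rfl⟩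
    constructor
    · rw [segment_eq_image_lineMap]
      exact ⟨t, ⟨ht0, le_of_lt ht1⟩, rfl⟩
    · simp only [Set.mem_singleton_iff]
      intro h
      have := (AffineMap.lineMap_injective ℝ hab).eq_iff (a := t) (b := 1)
      rw [AffineMap.lineMap_apply_one] at this
      exact (ne_of_lt ht1) (this.1 h)

lemma exists_outer_of_not_remain {u : V} {n : ℕ} (hu : u ∉ RemainSet G pos n) :
    ∃ m < n, u ∈ OuterVerts G pos (RemainSet G pos m) := by
  induction n with
  | zero => exact absurd (Set.mem_univ u) hu
  | succ k ih =>
    by_cases hk : u ∈ RemainSet G pos k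
    · refine ⟨k, Nat.lt_succ_self k, ?_⟩
      by_contra h
      exact hu ⟨hk, h⟩
    · obtain ⟨m, hm, h⟩ := ih hk
      exact ⟨m, Nat.lt_succ_of_lt hm, h⟩

lemma exists_layer_of_not_remain {u : V} {n : ℕ} (hu : u ∉ RemainSet G pos n) :
    ∃ m < n, u ∈ LayerSet G pos (m+1) := by
  obtain ⟨m, hm, h⟩ := exists_outer_of_not_remain hu
  refine ⟨m, hm, h.1, fun hc => ?_⟩
  exact hc.2 h

/-- Sandwich lemma: a remaining neighbor of a peeled vertex is on the current
outer boundary. -/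
lemma neighbor_peel (hemb : IsPlanarEmb G pos) {u v : V} {n : ℕ} (huv : G.Adj u v)
    (hu : u ∉ RemainSet G pos n) (hv : v ∈ RemainSet G pos n) :
    v ∈ OuterVerts G pos (RemainSet G pos n) := by
  set A := RemainSet G pos n with hA
  set K := DrawSet G pos A with hK
  have hposu : pos u ∉ K := not_mem_drawSet hemb hu
  -- pos u is in the closure of the outer region of stage n
  have hcl : pos u ∈ closure (OuterRegion G pos A) := by
    obtain ⟨m, hm, hout⟩ := exists_outer_of_not_remain hu
    have hsub : RemainSet G pos n ⊆ RemainSet G pos m := remainSet_antitone _ _ (le_of_lt hm)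
    exact closure_mono (outerRegion_anti hsub) hout.2
  -- the component of pos u in Kᶜ is unbounded
  have hcompu : ¬ IsBounded (connectedComponentIn Kᶜ (pos u)) := by
    have hKo : IsOpen Kᶜ := (isClosed_drawSet A).isOpen_compl
    obtain ⟨ε, hε, hball⟩ := Metric.isOpen_iff.1 hKo (pos u) hposu
    obtain ⟨o, ho1, ho2⟩ := mem_closure_iff.1 hcl _ Metric.isOpen_ball
      (Metric.mem_ball_self hε)
    have hoOut : o ∈ OuterRegion G pos A := ho2
    have heq : connectedComponentIn Kᶜ (pos u) = connectedComponentIn Kᶜ o :=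
      comp_eq_comp (convex_ball _ _).isPreconnected hball (Metric.mem_ball_self hε) ho1
    rw [heq]
    exact hoOut.2
  -- the half-open segment avoids K
  have hne : pos u ≠ pos v := fun h => huv.ne (pos_inj hemb h)
  set S := segment ℝ (pos u) (pos v) \ {pos v} with hS
  have hSK : S ⊆ Kᶜ := by
    rintro q ⟨hq1, hq2⟩ hqK
    exact hq2 (segment_drawSet hemb huv hu q hq1 hqK)
  have hSu : pos u ∈ S := ⟨left_mem_segment ℝ _ _, hne⟩
  have hSconn : IsPreconnected S := (segment_sub_convex hne).isPreconnected
  -- every point of S is in the outer region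
  have hSout : S ⊆ OuterRegion G pos A := by
    intro q hq
    refine ⟨hSK hq, ?_⟩
    have heq : connectedComponentIn Kᶜ (pos u) = connectedComponentIn Kᶜ q :=
      comp_eq_comp hSconn hSK hSu hq
    exact heq ▸ hcompu
  -- pos v is in the closure of S
  have hvc : pos v ∈ closure S := by
    rw [hS, segment_diff_eq hne]
    have h1 : pos v ∈ (AffineMap.lineMap (pos u) (pos v)) '' (closure (Set.Ico (0:ℝ) 1)) := by
      rw [closure_Ico (by norm_num : (0:ℝ) ≠ 1)]
      exact ⟨1, ⟨zero_le_one, le_refl 1⟩, AffineMap.lineMap_apply_one _ _⟩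
    have hc : Continuous (AffineMap.lineMap (pos u) (pos v) : ℝ →ᵃ[ℝ] ℝ × ℝ) :=
      AffineMap.continuous_of_finiteDimensional _
    exact image_closure_subset_closure_image hc h1
  exact ⟨hv, closure_mono hSout hvc⟩

end Peel
section NbrLayer

variable {V : Type*} [Fintype V] {G : SimpleGraph V} {pos : V → ℝ × ℝ}

lemma neighbor_layer (hemb : IsPlanarEmb G pos) {j : ℕ} {u w : V} (hadj : G.Adj w u)
    (hu : u ∈ LayerSet G pos (j+2)) :
    w ∈ LayerSet G pos (j+1) ∨ w ∈ LayerSet G pos (j+2) ∨ w ∈ LayerSet G pos (j+3) := by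
  have hu1 : u ∈ RemainSet G pos (j+1) := hu.1
  have hu2 : u ∉ RemainSet G pos (j+2) := hu.2
  by_cases hw : w ∈ RemainSet G pos (j+2)
  · right; right
    have := neighbor_peel hemb hadj.symm hu2 hw
    exact ⟨hw, fun hc => hc.2 this⟩
  · obtain ⟨m, hm, hwL⟩ := exists_layer_of_not_remain hw
    have hmge : j ≤ m := by
      by_contra h
      push_neg at h
      -- m + 1 ≤ j, so u remains at stage m+1 while w is peeled
      have hw2 : w ∉ RemainSet G pos (m+1) := hwL.2
      have hu3 : u ∈ RemainSet G pos (m+1) :=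
        remainSet_antitone _ _ (by omega) hu1
      have := neighbor_peel hemb hadj hw2 hu3
      have hu4 : u ∉ RemainSet G pos (m+2) := fun hc => hc.2 this
      exact hu4 (remainSet_antitone _ _ (by omega) hu1)
    have : m = j ∨ m = j + 1 := by omega
    rcases this with rfl | rfl
    · exact Or.inl hwL
    · exact Or.inr (Or.inl hwL)

end NbrLayer
section Blocks

variable {V : Type*} [Fintype V] {G : SimpleGraph V} {pos : V → ℝ × ℝ}

lemma conn_of_noCut {C : Set V} (hC : ConnInduced G C) (hnc : NoCutVertex G C) {x : V}
    (hne : (C \ {x}).Nonempty) : ConnInduced G (C \ {x}) := by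
  by_cases hx : x ∈ C
  · rcases hnc x hx with h | h
    · exact absurd h (Set.nonempty_iff_ne_empty.1 hne)
    · exact h
  · have : C \ {x} = C := Set.diff_singleton_eq_self hx
    rw [this]
    exact hC

lemma block_inter_subsingleton {A B₁ B₂ : Set V} (h1 : IsBlockOf G A B₁)
    (h2 : IsBlockOf G A B₂) (hne : B₁ ≠ B₂) : (B₁ ∩ B₂).Subsingleton := by
  by_contra h
  rw [Set.not_subsingleton_iff] at h
  obtain ⟨x, hx, y, hy, hxy⟩ := h
  -- the union is connected with no cut vertex, contradicting maximality
  have hconn : ConnInduced G (B₁ ∪ B₂) :=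
    SimpleGraph.induce_union_connected (SimpleGraph.Connected.preconnected h1.2.2.1)
      (SimpleGraph.Connected.preconnected h2.2.2.1) ⟨x, hx⟩
  have hnc : NoCutVertex G (B₁ ∪ B₂) := by
    intro z hz
    right
    have hw : ∃ w ∈ B₁ ∩ B₂, w ≠ z := by
      by_cases hxz : x = z
      · exact ⟨y, hy, fun h' => hxy (hxz ▸ h' ▸ rfl)⟩
      · exact ⟨x, hx, hxz⟩
    obtain ⟨w, hw1, hw2⟩ := hw
    have hd : (B₁ ∪ B₂) \ {z} = (B₁ \ {z}) ∪ (B₂ \ {z}) := Set.union_diff_distrib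
    rw [hd]
    have hB₁ : ConnInduced G (B₁ \ {z}) :=
      conn_of_noCut h1.2.2.1 h1.2.2.2.1 ⟨w, hw1.1, hw2⟩
    have hB₂ : ConnInduced G (B₂ \ {z}) :=
      conn_of_noCut h2.2.2.1 h2.2.2.2.1 ⟨w, hw1.2, hw2⟩
    exact SimpleGraph.induce_union_connected (SimpleGraph.Connected.preconnected hB₁)
      (SimpleGraph.Connected.preconnected hB₂) ⟨w, ⟨hw1.1, hw2⟩, ⟨hw1.2, hw2⟩⟩
  have hsub : B₁ ∪ B₂ ⊆ A := Set.union_subset h1.1 h2.1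
  have e1 : B₁ ∪ B₂ = B₁ := h1.2.2.2.2 _ Set.subset_union_left hsub hconn hnc
  have e2 : B₁ ∪ B₂ = B₂ := h2.2.2.2.2 _ Set.subset_union_right hsub hconn hnc
  exact hne (e1 ▸ e2)

lemma drawSet_inter_subset (hemb : IsPlanarEmb G pos) {B₁ B₂ : Set V}
    (hsub : (B₁ ∩ B₂).Subsingleton) :
    DrawSet G pos B₁ ∩ DrawSet G pos B₂ ⊆ pos '' (B₁ ∩ B₂) := by
  rintro q ⟨hq1, hq2⟩
  have hvert : ∀ (B : Set V) (c : V), q ∈ DrawSet G pos B → pos c = q → c ∈ B := by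
    intro B c hB hc
    by_contra hcB
    exact not_mem_drawSet hemb hcB (hc ▸ hB)
  rcases mem_drawSet_iff.1 hq1 with ⟨c, hc, hcq⟩ | ⟨u, v, hu, hv, huv, hseg⟩
  · exact ⟨c, ⟨hc, hvert B₂ c hq2 hcq⟩, hcq⟩
  · rcases mem_drawSet_iff.1 hq2 with ⟨c, hc, hcq⟩ | ⟨u', v', hu', hv', huv', hseg'⟩
    · exact ⟨c, ⟨hvert B₁ c hq1 hcq, hc⟩, hcq⟩
    · by_cases hset : ({u, v} : Set V) = {u', v'}
      · -- then u,v ∈ B₁ ∩ B₂, contradicting subsingleton since u ≠ v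
        exfalso
        have hu2 : u ∈ B₂ := by
          have : u ∈ ({u', v'} : Set V) := hset ▸ Set.mem_insert u {v}
          rcases this with h | h
          · exact h ▸ hu'
          · exact (Set.mem_singleton_iff.1 h) ▸ hv'
        have hv2 : v ∈ B₂ := by
          have : v ∈ ({u', v'} : Set V) := hset ▸ Set.mem_insert_of_mem u rfl
          rcases this with h | h
          · exact h ▸ hu'
          · exact (Set.mem_singleton_iff.1 h) ▸ hv'
        exact huv.ne (hsub ⟨hu, hu2⟩ ⟨hv, hv2⟩)
      · have := hemb.2.2 u v u' v' (Set.mem_univ _) (Set.mem_univ _) (Set.mem_univ _)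
          (Set.mem_univ _) huv huv' hset q ⟨hseg, hseg'⟩
        obtain ⟨ha, hb⟩ := this
        rcases ha with h | h
        · exact ⟨u, ⟨hu, hvert B₂ u hq2 h.symm⟩, h.symm⟩
        · exact ⟨v, ⟨hv, hvert B₂ v hq2 h.symm⟩, h.symm⟩

end Blocks
section DrawConn

variable {V : Type*} [Fintype V] {G : SimpleGraph V} {pos : V → ℝ × ℝ}

lemma joinedIn_segment {a b q : ℝ × ℝ} (hq : q ∈ segment ℝ a b) :
    JoinedIn (segment ℝ a b) q a ∧ JoinedIn (segment ℝ a b) q b := by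
  have hpc : IsPathConnected (segment ℝ a b) :=
    (convex_segment a b).isPathConnected ⟨a, left_mem_segment ℝ a b⟩
  exact ⟨hpc.joinedIn q hq a (left_mem_segment ℝ a b),
    hpc.joinedIn q hq b (right_mem_segment ℝ a b)⟩

lemma joinedIn_pos_of_walk {C : Set V} :
    ∀ {a b : ↥C} (_ : (G.induce C).Walk a b),
      JoinedIn (DrawSet G pos C) (pos a) (pos b) := by
  intro a b p
  induction p with
  | nil => exact JoinedIn.refl (mem_drawSet_of_mem (Subtype.coe_prop _))
  | @cons a c b h p ih =>
    have hadj : G.Adj (a : V) (c : V) := by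
      simpa using h
    have hseg : JoinedIn (segment ℝ (pos a) (pos c)) (pos a) (pos c) :=
      (joinedIn_segment (left_mem_segment ℝ _ _)).2
    exact (hseg.mono (segment_subset_drawSet a.2 c.2 hadj)).trans ih

lemma joinedIn_pos_vertices {C : Set V} (hC : ConnInduced G C) {a b : V}
    (ha : a ∈ C) (hb : b ∈ C) : JoinedIn (DrawSet G pos C) (pos a) (pos b) := by
  obtain ⟨p⟩ := hC.preconnected ⟨a, ha⟩ ⟨b, hb⟩
  exact joinedIn_pos_of_walk p

lemma joinedIn_drawSet_to_vertex {C : Set V} {q : ℝ × ℝ} (hq : q ∈ DrawSet G pos C) :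
    ∃ c ∈ C, JoinedIn (DrawSet G pos C) q (pos c) := by
  rcases mem_drawSet_iff.1 hq with ⟨c, hc, hcq⟩ | ⟨u, v, hu, hv, huv, hseg⟩
  · subst hcq
    exact ⟨c, hc, JoinedIn.refl hq⟩
  · exact ⟨u, hu, (joinedIn_segment hseg).1.mono (segment_subset_drawSet hu hv huv)⟩

lemma isPreconnected_drawSet {C : Set V} (hC : ConnInduced G C) :
    IsPreconnected (DrawSet G pos C) := by
  have hCne : C.Nonempty := by
    obtain ⟨⟨c, hc⟩⟩ := hC.nonempty
    exact ⟨c, hc⟩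
  obtain ⟨c₀, hc₀⟩ := hCne
  have : IsPathConnected (DrawSet G pos C) := by
    refine ⟨pos c₀, mem_drawSet_of_mem hc₀, fun {q} hq => ?_⟩
    obtain ⟨c, hc, hjoin⟩ := joinedIn_drawSet_to_vertex hq
    exact ((joinedIn_pos_vertices hC hc₀ hc).trans hjoin.symm)
  exact this.isConnected.isPreconnected

/-- The drawing of a block minus (the position of) one vertex is preconnected. -/
lemma isPreconnected_drawSet_diff (hemb : IsPlanarEmb G pos) {C : Set V}
    (hC : ConnInduced G C) (hnc : NoCutVertex G C) {x : V}
    (hone : (C \ {x}).Nonempty) :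
    IsPreconnected (DrawSet G pos C \ {pos x}) := by
  set T := DrawSet G pos C \ {pos x} with hT
  set core := DrawSet G pos (C \ {x}) with hcore
  have hconn' : ConnInduced G (C \ {x}) := conn_of_noCut hC hnc hone
  have hxcore : pos x ∉ core := not_mem_drawSet hemb (fun h => h.2 rfl)
  have hcoreT : core ⊆ T := fun q hq =>
    ⟨drawSet_mono Set.diff_subset hq, fun h => hxcore ((Set.mem_singleton_iff.1 h) ▸ hq)⟩
  -- every point of T joins to a vertex of C \ {x} within T
  have hstep : ∀ q ∈ T, ∃ c ∈ C \ {x}, JoinedIn T q (pos c) := by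
    rintro q ⟨hq, hqx⟩
    rcases mem_drawSet_iff.1 hq with ⟨c, hc, hcq⟩ | ⟨u, v, hu, hv, huv, hseg⟩
    · have hcx : c ≠ x := fun h => hqx (by rw [← hcq, h]; exact Set.mem_singleton _)
      subst hcq
      exact ⟨c, ⟨hc, hcx⟩, JoinedIn.refl ⟨hq, hqx⟩⟩
    · by_cases hxu : x = u
      · -- q is on a segment out of x; walk to the far end v
        subst hxu
        rw [segment_symm] at hseg
        have hne : pos v ≠ pos x := fun h => huv.ne (pos_inj hemb h.symm)
        have hqS : q ∈ segment ℝ (pos v) (pos x) \ {pos x} := ⟨hseg, hqx⟩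
        have hSsub : segment ℝ (pos v) (pos x) \ {pos x} ⊆ T := fun r hr =>
          ⟨segment_subset_drawSet hu hv huv (by rw [segment_symm]; exact hr.1), hr.2⟩
        have hpc : IsPathConnected (segment ℝ (pos v) (pos x) \ {pos x}) :=
          (segment_sub_convex hne).isPathConnected ⟨pos v, left_mem_segment ℝ _ _, hne⟩
        have hj : JoinedIn (segment ℝ (pos v) (pos x) \ {pos x}) q (pos v) :=
          hpc.joinedIn q hqS (pos v) ⟨left_mem_segment ℝ _ _, hne⟩
        exact ⟨v, ⟨hv, fun h => huv.ne' (h ▸ rfl)⟩, hj.mono hSsub⟩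
      · by_cases hxv : x = v
        · subst hxv
          have hne : pos u ≠ pos x := fun h => huv.ne (pos_inj hemb h)
          have hqS : q ∈ segment ℝ (pos u) (pos x) \ {pos x} := ⟨hseg, hqx⟩
          have hSsub : segment ℝ (pos u) (pos x) \ {pos x} ⊆ T := fun r hr =>
            ⟨segment_subset_drawSet hu hv huv hr.1, hr.2⟩
          have hpc : IsPathConnected (segment ℝ (pos u) (pos x) \ {pos x}) :=
            (segment_sub_convex hne).isPathConnected ⟨pos u, left_mem_segment ℝ _ _, hne⟩
          have hj : JoinedIn (segment ℝ (pos u) (pos x) \ {pos x}) q (pos u) :=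
            hpc.joinedIn q hqS (pos u) ⟨left_mem_segment ℝ _ _, hne⟩
          exact ⟨u, ⟨hu, fun h => huv.ne (h ▸ rfl)⟩, hj.mono hSsub⟩
        · -- x is not an endpoint: the whole segment avoids pos x
          have hsegT : segment ℝ (pos u) (pos v) ⊆ T := by
            intro r hr
            refine ⟨segment_subset_drawSet hu hv huv hr, fun hrx => ?_⟩
            exact hemb.2.1 u v x (Set.mem_univ _) (Set.mem_univ _) (Set.mem_univ _)
              huv hxu hxv ((Set.mem_singleton_iff.1 hrx) ▸ hr)
          exact ⟨v, ⟨hv, fun h => hxv h.symm⟩,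
            ((joinedIn_segment hseg).2).mono hsegT⟩
  obtain ⟨c₀, hc₀⟩ := hone
  have hpcT : IsPathConnected T := by
    refine ⟨pos c₀, hcoreT (mem_drawSet_of_mem hc₀), fun {q} hq => ?_⟩
    obtain ⟨c, hc, hjoin⟩ := hstep q hq
    have hcc : JoinedIn core (pos c₀) (pos c) := joinedIn_pos_vertices hconn' hc₀ hc
    exact (hcc.mono hcoreT).trans hjoin.symm
  exact hpcT.isConnected.isPreconnected

end DrawConn
section Unique

open Bornology

variable {V : Type*} [Fintype V] {G : SimpleGraph V} {pos : V → ℝ × ℝ}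

lemma edge_of_enclosed {C : Set V} {p : ℝ × ℝ} (hp : p ∈ EnclosedRegion G pos C) :
    ∃ a b : V, a ∈ C ∧ b ∈ C ∧ G.Adj a b := by
  by_contra h
  push_neg at h
  have hK : DrawSet G pos C = pos '' C := by
    apply Set.Subset.antisymm
    · intro q hq
      rcases mem_drawSet_iff.1 hq with ⟨c, hc, hcq⟩ | ⟨u, v, hu, hv, huv, _⟩
      · exact ⟨c, hc, hcq⟩
      · exact absurd huv (h u v hu hv)
    · exact Set.subset_union_left
  have hfin : (pos '' C).Finite := (C.toFinite.image pos)
  have := unbounded_comp_of_finite hfin (hK ▸ hp.1)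
  exact this (hK ▸ hp.2)

/-- (T1) Two layer components of the same layer enclosing a common point coincide. -/
lemma enclosed_unique (hemb : IsPlanarEmb G pos) {j : ℕ} {B₁ B₂ : Set V}
    (h1 : IsLayerComp G pos (j+1) B₁) (h2 : IsLayerComp G pos (j+1) B₂)
    {p : ℝ × ℝ} (hp1 : p ∈ EnclosedRegion G pos B₁) (hp2 : p ∈ EnclosedRegion G pos B₂) :
    B₁ = B₂ := by
  by_contra hne
  have hsub : (B₁ ∩ B₂).Subsingleton := block_inter_subsingleton h1 h2 hne
  have hK12 : DrawSet G pos B₁ ∩ DrawSet G pos B₂ ⊆ pos '' (B₁ ∩ B₂) :=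
    drawSet_inter_subset hemb hsub
  have hEsub : (pos '' (B₁ ∩ B₂)).Subsingleton := fun a ha b hb => by
    obtain ⟨a', ha', rfl⟩ := ha
    obtain ⟨b', hb', rfl⟩ := hb
    rw [hsub ha' hb']
  have hE : IsPreconnected (pos '' (B₁ ∩ B₂))ᶜ :=
    (Set.Countable.isPathConnected_compl_of_one_lt_rank plane_rank
      hEsub.finite.countable).isConnected.isPreconnected
  have hEK₁ : pos '' (B₁ ∩ B₂) ⊆ DrawSet G pos B₁ :=
    fun q hq => by
      obtain ⟨c, hc, rfl⟩ := hq
      exact mem_drawSet_of_mem (G := G) hc.1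
  have hbE : IsBounded (pos '' (B₁ ∩ B₂)) :=
    ((isCompact_drawSet (G := G) (pos := pos) B₁).isBounded).subset hEK₁
  -- both blocks contain an edge
  obtain ⟨a₁, b₁, ha₁, hb₁, hadj₁⟩ := edge_of_enclosed hp1
  obtain ⟨a₂, b₂, ha₂, hb₂, hadj₂⟩ := edge_of_enclosed hp2
  -- preconnectedness of K \ E
  have hSpre : ∀ (B : Set V), IsBlockOf G (LayerSet G pos (j+1)) B →
      (∃ a b, a ∈ B ∧ b ∈ B ∧ G.Adj a b) →
      IsPreconnected (DrawSet G pos B \ pos '' (B₁ ∩ B₂)) := by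
    intro B hB hedge
    rcases hsub.eq_empty_or_singleton with hI | ⟨x, hI⟩
    · rw [hI]
      simp only [Set.image_empty, Set.diff_empty]
      exact isPreconnected_drawSet hB.2.2.1
    · rw [hI]
      obtain ⟨a, b, ha, hb, hadj⟩ := hedge
      have hone : (B \ {x}).Nonempty := by
        by_cases hax : a = x
        · exact ⟨b, hb, fun h => hadj.ne (hax ▸ h ▸ rfl)⟩
        · exact ⟨a, ha, hax⟩
      have := isPreconnected_drawSet_diff hemb hB.2.2.1 hB.2.2.2.1 hone
      rwa [Set.image_singleton]
  -- a vertex of each block outside the intersection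
  have hvert : ∀ (B : Set V), B ⊆ LayerSet G pos (j+1) →
      (∃ a b, a ∈ B ∧ b ∈ B ∧ G.Adj a b) →
      ∃ c, c ∈ B ∧ c ∉ B₁ ∩ B₂ := by
    intro B _ hedge
    obtain ⟨a, b, ha, hb, hadj⟩ := hedge
    by_cases haI : a ∈ B₁ ∩ B₂
    · by_cases hbI : b ∈ B₁ ∩ B₂
      · exact absurd (hsub haI hbI) hadj.ne
      · exact ⟨b, hb, hbI⟩
    · exact ⟨a, ha, haI⟩
  obtain ⟨c₁, hc₁B, hc₁I⟩ := hvert B₁ h1.1 ⟨a₁, b₁, ha₁, hb₁, hadj₁⟩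
  obtain ⟨c₂, hc₂B, hc₂I⟩ := hvert B₂ h2.1 ⟨a₂, b₂, ha₂, hb₂, hadj₂⟩
  have hc₁B₂ : c₁ ∉ B₂ := fun h => hc₁I ⟨hc₁B, h⟩
  have hc₂B₁ : c₂ ∉ B₁ := fun h => hc₂I ⟨h, hc₂B⟩
  have hmemE : ∀ (c : V), c ∉ B₁ ∩ B₂ → pos c ∉ pos '' (B₁ ∩ B₂) := by
    intro c hc hmem
    obtain ⟨d, hd, hdc⟩ := hmem
    exact hc ((pos_inj hemb hdc) ▸ hd)
  -- the chosen vertices lie in unbounded components of the other complement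
  have hub : ∀ (B B' : Set V), IsLayerComp G pos (j+1) B' → (c : V) → c ∈ B →
      B ⊆ LayerSet G pos (j+1) → c ∉ B' →
      ¬ IsBounded (connectedComponentIn (DrawSet G pos B')ᶜ (pos c)) := by
    intro B B' hB' c hc hBL hcB' hbdd
    have hnotin : pos c ∉ DrawSet G pos B' := not_mem_drawSet hemb hcB'
    have hnotenc : pos c ∉ EnclosedRegion G pos B' :=
      layer_not_enclosed (hBL hc) (fun v hv => (hB'.1 hv).1)
    exact hnotenc ⟨hnotin, hbdd⟩
  exact no_double_enclosure (isClosed_drawSet B₁) (isClosed_drawSet B₂) hE hbE hEK₁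
    (hSpre B₁ h1 ⟨a₁, b₁, ha₁, hb₁, hadj₁⟩) (hSpre B₂ h2 ⟨a₂, b₂, ha₂, hb₂, hadj₂⟩)
    hK12
    ⟨mem_drawSet_of_mem hc₁B, hmemE c₁ hc₁I⟩
    ⟨mem_drawSet_of_mem hc₂B, hmemE c₂ hc₂I⟩
    (hub B₁ B₂ h2 c₁ hc₁B h1.1 hc₁B₂)
    (hub B₂ B₁ h1 c₂ hc₂B h2.1 hc₂B₁)
    hp1.1 hp2.1 hp1.2 hp2.2

end Unique
section Witness

open Bornology

variable {V : Type*} [Fintype V] {G : SimpleGraph V} {pos : V → ℝ × ℝ}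

/-- Witness extraction: every 3-non-vacuous layer component of `L_{j+1}` admits a
dominator `w ∈ D` in layers `j+2, j+3, j+4` which is moreover tied to a layer
component `C'` of `L_{j+2}` enclosed by `C`. -/
lemma exists_witness (hemb : IsPlanarEmb G pos) {D : Set V} (hD : IsVeDomSet G D)
    {j : ℕ} {C : Set V} (hC : IsLayerComp G pos (j+1) C)
    (h3 : SNonVacuous G pos 3 (j+1) C) :
    ∃ w : V, w ∈ D ∧
      (w ∈ LayerSet G pos (j+2) ∨ w ∈ LayerSet G pos (j+3) ∨ w ∈ LayerSet G pos (j+4)) ∧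
      ∃ C' : Set V, IsLayerComp G pos (j+2) C' ∧
        (∀ v ∈ C', pos v ∈ EnclosedRegion G pos C) ∧
        (w ∈ C' ∨ pos w ∈ EnclosedRegion G pos C') := by
  obtain ⟨C', hC', h2, hencl⟩ := h3
  obtain ⟨C'', hC'', h1, hencl2⟩ := h2
  obtain ⟨x, hx, hxenc⟩ := h1
  -- C'' contains an edge
  obtain ⟨a, b, ha, hb, hadj⟩ := edge_of_enclosed hxenc
  -- ve-domination of this edge
  obtain ⟨w, hwD, hcase⟩ := hD a b hadj
  -- extract the dominated endpoint
  have hu : ∃ u, u ∈ C'' ∧ (u = w ∨ G.Adj w u) := by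
    rcases hcase with h | h
    · rcases h with h | ⟨d, hd, hdadj⟩
      · exact ⟨a, ha, Or.inl h⟩
      · exact ⟨a, ha, Or.inr ((Set.mem_singleton_iff.1 hd) ▸ hdadj)⟩
    · rcases h with h | ⟨d, hd, hdadj⟩
      · exact ⟨b, hb, Or.inl h⟩
      · exact ⟨b, hb, Or.inr ((Set.mem_singleton_iff.1 hd) ▸ hdadj)⟩
  obtain ⟨u, huC, hucase⟩ := hu
  have huL : u ∈ LayerSet G pos (j+3) := hC''.1 huC
  refine ⟨w, hwD, ?_, C', hC', hencl, ?_⟩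
  · -- the layer window
    rcases hucase with rfl | hadj'
    · exact Or.inr (Or.inl huL)
    · have := neighbor_layer hemb hadj' (by exact_mod_cast huL : u ∈ LayerSet G pos ((j+1)+2))
      rcases this with h | h | h
      · exact Or.inl h
      · exact Or.inr (Or.inl h)
      · exact Or.inr (Or.inr h)
  · -- the enclosure invariant
    rcases hucase with rfl | hadj'
    · exact Or.inr (hencl2 u huC)
    · by_cases hwC' : w ∈ C'
      · exact Or.inl hwC'
      · right
        have huC' : u ∉ C' := by
          intro h
          exact layerSet_disjoint (Nat.lt_succ_self (j+1)) u (hC'.1 h) huL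
        have hupos : pos u ∈ EnclosedRegion G pos C' := hencl2 u huC
        have hseg : ∀ q ∈ segment ℝ (pos w) (pos u), q ∉ DrawSet G pos C' :=
          segment_disjoint_drawSet hemb hadj' hwC' huC'
        have hcomp : connectedComponentIn (DrawSet G pos C')ᶜ (pos w)
            = connectedComponentIn (DrawSet G pos C')ᶜ (pos u) :=
          comp_eq_comp (convex_segment _ _).isPreconnected hseg
            (left_mem_segment ℝ _ _) (right_mem_segment ℝ _ _)
        exact ⟨not_mem_drawSet hemb hwC', hcomp ▸ hupos.2⟩

end Witness
section Final

variable {V : Type*} [Fintype V] {G : SimpleGraph V} {pos : V → ℝ × ℝ}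

lemma witness_unique (hemb : IsPlanarEmb G pos) {j : ℕ} {C₁ C₂ C₁' C₂' : Set V} {w : V}
    (h₁ : IsLayerComp G pos (j+1) C₁) (h₂ : IsLayerComp G pos (j+1) C₂)
    (h₁' : IsLayerComp G pos (j+2) C₁') (h₂' : IsLayerComp G pos (j+2) C₂')
    (he₁ : ∀ v ∈ C₁', pos v ∈ EnclosedRegion G pos C₁)
    (he₂ : ∀ v ∈ C₂', pos v ∈ EnclosedRegion G pos C₂)
    (hw₁ : w ∈ C₁' ∨ pos w ∈ EnclosedRegion G pos C₁')
    (hw₂ : w ∈ C₂' ∨ pos w ∈ EnclosedRegion G pos C₂') : C₁ = C₂ := by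
  have hrem : ∀ (B : Set V), IsLayerComp G pos (j+2) B → B ⊆ RemainSet G pos (j+1) :=
    fun B hB v hv => (hB.1 hv).1
  rcases hw₁ with hw₁ | hw₁ <;> rcases hw₂ with hw₂ | hw₂
  · exact enclosed_unique hemb h₁ h₂ (he₁ w hw₁) (he₂ w hw₂)
  · exact absurd hw₂ (layer_not_enclosed (h₁'.1 hw₁) (hrem C₂' h₂'))
  · exact absurd hw₁ (layer_not_enclosed (h₂'.1 hw₂) (hrem C₁' h₁'))
  · have hC' : C₁' = C₂' := enclosed_unique hemb h₁' h₂' hw₁ hw₂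
    subst hC'
    obtain ⟨v, hv⟩ := h₁'.2.1
    exact enclosed_unique hemb h₁ h₂ (he₁ v hv) (he₂ v hv)

theorem threeNVCount_le'
    (hemb : IsPlanarEmb G pos) (D : Set V) (hD : IsVeDomSet G D) :
    ∀ i : ℕ, threeNVCount G pos i ≤
      layerK G pos D (i + 1) + layerK G pos D (i + 2) +
        layerK G pos D (i + 3) + layerK G pos D (i + 4) := by
  intro i
  match i with
  | 0 =>
    have hempty : {C : Set V | IsLayerComp G pos 0 C ∧ SNonVacuous G pos 3 0 C} = ∅ := by
      rw [Set.eq_empty_iff_forall_notMem]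
      rintro C ⟨hC, -⟩
      obtain ⟨v, hv⟩ := hC.2.1
      have : v ∈ LayerSet G pos 0 := hC.1 hv
      simp only [LayerSet, RemainSet, Nat.zero_sub, Set.diff_self] at this
      exact this
    have : threeNVCount G pos 0 = 0 := by
      unfold threeNVCount
      rw [hempty, Set.ncard_empty]
    omega
  | (j+1) =>
    set S := {C : Set V | IsLayerComp G pos (j+1) C ∧ SNonVacuous G pos 3 (j+1) C} with hS
    rcases Set.eq_empty_or_nonempty S with hSe | hSne
    · have : threeNVCount G pos (j+1) = 0 := by
        unfold threeNVCount
        rw [← hS, hSe, Set.ncard_empty]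
      omega
    · obtain ⟨C₀, hC₀⟩ := hSne
      have hVne : Nonempty V := by
        obtain ⟨v, hv⟩ := hC₀.1.2.1
        exact ⟨v⟩
      have hsel : ∀ C : Set V, ∃ w : V, C ∈ S →
          (w ∈ D ∧
          (w ∈ LayerSet G pos (j+2) ∨ w ∈ LayerSet G pos (j+3) ∨ w ∈ LayerSet G pos (j+4)) ∧
          ∃ C' : Set V, IsLayerComp G pos (j+2) C' ∧
            (∀ v ∈ C', pos v ∈ EnclosedRegion G pos C) ∧
            (w ∈ C' ∨ pos w ∈ EnclosedRegion G pos C')) := by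
        intro C
        by_cases hC : C ∈ S
        · obtain ⟨w, hw⟩ := exists_witness hemb hD hC.1 hC.2
          exact ⟨w, fun _ => hw⟩
        · exact ⟨Classical.arbitrary V, fun h => absurd h hC⟩
      choose f hf using hsel
      set T := D ∩ (LayerSet G pos (j+2) ∪ LayerSet G pos (j+3) ∪ LayerSet G pos (j+4))
        with hT
      have hmaps : ∀ C ∈ S, f C ∈ T := by
        intro C hC
        obtain ⟨hwD, hwin, -⟩ := hf C hC
        refine ⟨hwD, ?_⟩
        rcases hwin with h | h | h
        · exact Or.inl (Or.inl h)
        · exact Or.inl (Or.inr h)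
        · exact Or.inr h
      have hinj : Set.InjOn f S := by
        intro C₁ hC₁ C₂ hC₂ heq
        obtain ⟨-, -, C₁', h₁', he₁, hw₁⟩ := hf C₁ hC₁
        obtain ⟨-, -, C₂', h₂', he₂, hw₂⟩ := hf C₂ hC₂
        rw [heq] at hw₁
        exact witness_unique hemb hC₁.1 hC₂.1 h₁' h₂' he₁ he₂ hw₁ hw₂
      have hcard : S.ncard ≤ T.ncard :=
        Set.ncard_le_ncard_of_injOn f hmaps hinj (Set.toFinite T)
      have hTbound : T.ncard ≤ layerK G pos D (j+2) + layerK G pos D (j+3)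
          + layerK G pos D (j+4) := by
        rw [hT, Set.inter_union_distrib_left, Set.inter_union_distrib_left]
        refine le_trans (Set.ncard_union_le _ _) ?_
        have := Set.ncard_union_le (D ∩ LayerSet G pos (j+2)) (D ∩ LayerSet G pos (j+3))
        unfold layerK
        omega
      have hcount : threeNVCount G pos (j+1) = S.ncard := rfl
      have hfin : threeNVCount G pos (j+1) ≤ layerK G pos D (j+2) + layerK G pos D (j+3)
          + layerK G pos D (j+4) := by
        rw [hcount]
        exact le_trans hcard hTbound
      have heq1 : j + 1 + 1 = j + 2 := rfl
      have heq2 : j + 1 + 2 = j + 3 := rfl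
      have heq3 : j + 1 + 3 = j + 4 := rfl
      rw [heq1, heq2, heq3]
      omega

end Final

/-- For a plane graph `G` with ve-dominating set `D`, the number `c_i` of
`3`-non-vacuous layer components of layer `L_i` satisfies
`c_i ≤ k_{i+1} + k_{i+2} + k_{i+3} + k_{i+4}` where `k_j = |D ∩ L_j|`. -/
theorem threeNVCount_le
    {V : Type*} [Fintype V] (G : SimpleGraph V) (pos : V → ℝ × ℝ)
    (hemb : IsPlanarEmb G pos) (D : Set V) (hD : IsVeDomSet G D) :
    ∀ i : ℕ, threeNVCount G pos i ≤
      layerK G pos D (i + 1) + layerK G pos D (i + 2) +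
        layerK G pos D (i + 3) + layerK G pos D (i + 4) :=
  threeNVCount_le' hemb D hD
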